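/- Let (Y_t)_{t≥0} be a real-valued stochastic process with E[Y_t Y_s] = σ² e^{−λ|t−s|} for all s,t ≥ 0, where σ² > 0 and λ > 0. Fix C > 0 and define X_t = Y_t − C ∫_0^t e^{−(C+λ)(t−s)} Y_s ds. Then E[X_t²] = σ² (1 + (C/(C+λ))(e^{−2(C+λ)t} − 1)), which is strictly less than σ² for every t > 0 and decreasing in t. -/

import Mathlib

open MeasureTheory Real intervalIntegral

lemma int_exp_mul (c l r : ℝ) (hc : c ≠ 0) :
    ∫ x in l..r, Real.exp (c * x) = (Real.exp (c * r) - Real.exp (c * l)) / c := by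
  have h : ∀ x ∈ Set.uIcc l r, HasDerivAt (fun y => Real.exp (c * y) / c) (Real.exp (c * x)) x := by
    intro x _
    have h1 : HasDerivAt (fun y : ℝ => Real.exp (c * y)) (Real.exp (c * x) * (c * 1)) x :=
      ((hasDerivAt_id x).const_mul c).exp
    have h2 := h1.div_const c
    have h3 : Real.exp (c * x) * (c * 1) / c = Real.exp (c * x) := by field_simp
    rwa [h3] at h2
  rw [intervalIntegral.integral_eq_sub_of_hasDerivAt h
    ((Real.continuous_exp.comp (continuous_const.mul continuous_id)).intervalIntegrable l r)]
  ring

set_option maxHeartbeats 1000000 in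
/-- If `E[Y_t Y_s] = σ² e^{−λ|t−s|}` and `X_t = Y_t − C ∫_0^t e^{−(C+λ)(t−s)} Y_s ds`, then
`E[X_t²] = σ²(1 + (C/(C+λ))(e^{−2(C+λ)t} − 1))`, which is `< σ²` for `t > 0` and decreasing. -/
theorem stmt7 {Ω : Type*} [MeasurableSpace Ω] (P : Measure Ω) [IsProbabilityMeasure P]
    (σ2 lam C : ℝ) (hσ : 0 < σ2) (hlam : 0 < lam) (hC : 0 < C)
    (Y : ℝ → Ω → ℝ) (hmeas : Measurable (Function.uncurry Y))
    (hpath : ∀ ω, Continuous fun t => Y t ω)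
    (hsq : ∀ t : ℝ, 0 ≤ t → Integrable (fun ω => (Y t ω) ^ 2) P)
    (hcov : ∀ s t : ℝ, 0 ≤ s → 0 ≤ t →
      ∫ ω, Y t ω * Y s ω ∂P = σ2 * Real.exp (-lam * |t - s|))
    (X : ℝ → Ω → ℝ)
    (hX : ∀ t ω, X t ω
      = Y t ω - C * ∫ s in (0:ℝ)..t, Real.exp (-(C + lam) * (t - s)) * Y s ω) :
    (∀ t : ℝ, 0 ≤ t →
      ∫ ω, (X t ω) ^ 2 ∂P
        = σ2 * (1 + C / (C + lam) * (Real.exp (-2 * (C + lam) * t) - 1))) ∧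
    (∀ t : ℝ, 0 < t → ∫ ω, (X t ω) ^ 2 ∂P < σ2) ∧
    (∀ s t : ℝ, 0 ≤ s → s < t → ∫ ω, (X t ω) ^ 2 ∂P < ∫ ω, (X s ω) ^ 2 ∂P) := by
  have hA : (0:ℝ) < C + lam := by linarith
  have hB : (0:ℝ) < C + 2*lam := by linarith
  have hYmeas : ∀ s : ℝ, Measurable (Y s) := by
    intro s
    exact hmeas.comp (measurable_const.prodMk measurable_id)
  have hYsq : ∀ s : ℝ, 0 ≤ s → ∫ ω, Y s ω ^ 2 ∂P = σ2 := by
    intro s hs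
    have h := hcov s s hs hs
    simp only [sub_self, abs_zero, mul_zero, Real.exp_zero, mul_one] at h
    rw [← h]
    congr 1; funext ω; ring
  have hptle : ∀ (a b : ℝ), |a * b| ≤ (a ^ 2 + b ^ 2) / 2 := by
    intro a b
    have h1 := sq_nonneg (a - b)
    have h2 := sq_nonneg (a + b)
    have h3 := abs_nonneg (a * b)
    have h4 : |a * b| ^ 2 = (a * b) ^ 2 := sq_abs _
    nlinarith [sq_nonneg (|a * b| - a * b), sq_nonneg (|a * b| + a * b)]
  have hhalf : ∀ s u : ℝ, 0 ≤ s → 0 ≤ u →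
      Integrable (fun ω => (Y s ω ^ 2 + Y u ω ^ 2) / 2) P := by
    intro s u hs hu
    have h := ((hsq s hs).add (hsq u hu)).div_const 2
    exact h
  have hmul : ∀ s u : ℝ, 0 ≤ s → 0 ≤ u → Integrable (fun ω => Y s ω * Y u ω) P := by
    intro s u hs hu
    refine Integrable.mono' (hhalf s u hs hu)
      ((hYmeas s).mul (hYmeas u)).aestronglyMeasurable ?_
    filter_upwards with ω
    rw [Real.norm_eq_abs]
    exact hptle _ _
  have habs : ∀ s u : ℝ, 0 ≤ s → 0 ≤ u → ∫ ω, |Y s ω * Y u ω| ∂P ≤ σ2 := by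
    intro s u hs hu
    have hle : ∀ ω, |Y s ω * Y u ω| ≤ (Y s ω ^ 2 + Y u ω ^ 2) / 2 := by
      intro ω
      exact hptle _ _
    calc ∫ ω, |Y s ω * Y u ω| ∂P ≤ ∫ ω, (Y s ω ^ 2 + Y u ω ^ 2) / 2 ∂P := by
          exact integral_mono ((hmul s u hs hu).abs) (hhalf s u hs hu) hle
      _ = σ2 := by
          rw [MeasureTheory.integral_div, integral_add (hsq s hs) (hsq u hu), hYsq s hs, hYsq u hu]
          ring
  have main : ∀ t : ℝ, 0 ≤ t → ∫ ω, (X t ω) ^ 2 ∂P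
      = σ2 * (1 + C / (C + lam) * (Real.exp (-2 * (C + lam) * t) - 1)) := by
    intro t ht
    set R := (volume : Measure ℝ).restrict (Set.Ioc (0:ℝ) t) with hR
    haveI hRfin : IsFiniteMeasure R := by
      constructor
      rw [hR, Measure.restrict_apply_univ]
      simp [Real.volume_Ioc]
    set k : ℝ → ℝ := fun s => Real.exp (-(C + lam) * (t - s)) with hk
    have hkcont : Continuous k := by
      apply Real.continuous_exp.comp
      fun_prop
    have hkbd : ∀ s ∈ Set.Ioc (0:ℝ) t, |k s| ≤ 1 := by
      intro s hs
      rw [hk]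
      simp only
      rw [abs_of_pos (Real.exp_pos _)]
      rw [Real.exp_le_one_iff]
      nlinarith [hs.2]
    set Z : Ω → ℝ := fun ω => ∫ s in (0:ℝ)..t, k s * Y s ω with hZ
    have hZset : ∀ ω, Z ω = ∫ s, k s * Y s ω ∂ R := by
      intro ω
      rw [hZ]
      exact intervalIntegral.integral_of_le ht
    have hmeas2 : AEStronglyMeasurable (fun q : ℝ × Ω => k q.1 * (Y t q.2 * Y q.1 q.2))
        (R.prod P) := by
      apply Measurable.aestronglyMeasurable
      exact ((hkcont.measurable).comp measurable_fst).mul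
        (((hYmeas t).comp measurable_snd).mul hmeas)
    have hInt2 : Integrable (fun q : ℝ × Ω => k q.1 * (Y t q.2 * Y q.1 q.2)) (R.prod P) := by
      rw [integrable_prod_iff hmeas2]
      constructor
      · filter_upwards [ae_restrict_mem measurableSet_Ioc] with s hs
        exact (hmul t s ht hs.1.le).const_mul (k s)
      · refine Integrable.mono' (integrable_const σ2) hmeas2.norm.integral_prod_right' ?_
        filter_upwards [ae_restrict_mem measurableSet_Ioc] with s hs
        rw [Real.norm_eq_abs, abs_of_nonneg (integral_nonneg fun ω => norm_nonneg _)]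
        have h1 : (fun ω => ‖k s * (Y t ω * Y s ω)‖)
            = fun ω => |k s| * |Y t ω * Y s ω| := by
          funext ω; rw [Real.norm_eq_abs, abs_mul]
        calc ∫ ω, ‖k s * (Y t ω * Y s ω)‖ ∂P = |k s| * ∫ ω, |Y t ω * Y s ω| ∂P := by
              rw [h1, MeasureTheory.integral_const_mul]
          _ ≤ 1 * σ2 := by
              exact mul_le_mul (hkbd s hs) (habs t s ht hs.1.le)
                (integral_nonneg fun ω => abs_nonneg _) zero_le_one
          _ = σ2 := one_mul _
    have hprodae : ∀ᵐ p : ℝ × ℝ ∂(R.prod R), p ∈ Set.Ioc (0:ℝ) t ×ˢ Set.Ioc (0:ℝ) t := by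
      rw [hR, Measure.prod_restrict]
      exact ae_restrict_mem (measurableSet_Ioc.prod measurableSet_Ioc)
    have hmeas3 : AEStronglyMeasurable
        (fun p : (ℝ × ℝ) × Ω => (k p.1.1 * k p.1.2) * (Y p.1.1 p.2 * Y p.1.2 p.2))
        ((R.prod R).prod P) := by
      apply Measurable.aestronglyMeasurable
      have m1 : Measurable fun p : (ℝ × ℝ) × Ω => Y p.1.1 p.2 :=
        hmeas.comp ((measurable_fst.fst).prodMk measurable_snd)
      have m2 : Measurable fun p : (ℝ × ℝ) × Ω => Y p.1.2 p.2 :=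
        hmeas.comp ((measurable_fst.snd).prodMk measurable_snd)
      exact ((hkcont.measurable.comp measurable_fst.fst).mul
        (hkcont.measurable.comp measurable_fst.snd)).mul (m1.mul m2)
    have hInt3 : Integrable
        (fun p : (ℝ × ℝ) × Ω => (k p.1.1 * k p.1.2) * (Y p.1.1 p.2 * Y p.1.2 p.2))
        ((R.prod R).prod P) := by
      rw [integrable_prod_iff hmeas3]
      constructor
      · filter_upwards [hprodae] with p hp
        exact (hmul p.1 p.2 hp.1.1.le hp.2.1.le).const_mul _
      · refine Integrable.mono' (integrable_const σ2) hmeas3.norm.integral_prod_right' ?_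
        filter_upwards [hprodae] with p hp
        rw [Real.norm_eq_abs, abs_of_nonneg (integral_nonneg fun ω => norm_nonneg _)]
        have h1 : (fun ω => ‖(k p.1 * k p.2) * (Y p.1 ω * Y p.2 ω)‖)
            = fun ω => (|k p.1| * |k p.2|) * |Y p.1 ω * Y p.2 ω| := by
          funext ω; rw [Real.norm_eq_abs, abs_mul, abs_mul]
        calc ∫ ω, ‖(k p.1 * k p.2) * (Y p.1 ω * Y p.2 ω)‖ ∂P
            = (|k p.1| * |k p.2|) * ∫ ω, |Y p.1 ω * Y p.2 ω| ∂P := by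
              rw [h1, MeasureTheory.integral_const_mul]
          _ ≤ (1 * 1) * σ2 := by
              refine mul_le_mul (mul_le_mul (hkbd _ hp.1) (hkbd _ hp.2) (abs_nonneg _)
                zero_le_one) (habs p.1 p.2 hp.1.1.le hp.2.1.le)
                (integral_nonneg fun ω => abs_nonneg _) (by norm_num)
          _ = σ2 := by ring
    have iYZ : Integrable (fun ω => Y t ω * Z ω) P := by
      refine hInt2.integral_prod_right.congr ?_
      filter_upwards with ω
      rw [hZset ω, ← MeasureTheory.integral_const_mul]
      congr 1
      funext s
      ring
    have iZZ : Integrable (fun ω => Z ω ^ 2) P := by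
      refine hInt3.integral_prod_right.congr ?_
      filter_upwards with ω
      rw [pow_two, hZset ω,
        ← integral_prod_mul (μ := R) (ν := R) (fun s => k s * Y s ω) (fun u => k u * Y u ω)]
      congr 1
      funext p
      ring
    have eYZ : ∫ ω, Y t ω * Z ω ∂P = ∫ s, k s * (σ2 * Real.exp (-lam * (t - s))) ∂ R := by
      have e1 : ∀ ω, Y t ω * Z ω = ∫ s, k s * (Y t ω * Y s ω) ∂ R := by
        intro ω
        rw [hZset ω, ← MeasureTheory.integral_const_mul]
        congr 1
        funext s
        ring
      rw [integral_congr_ae (ae_of_all _ e1),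
        ← integral_integral_swap (f := fun s ω => k s * (Y t ω * Y s ω)) hInt2]
      refine integral_congr_ae ?_
      filter_upwards [ae_restrict_mem measurableSet_Ioc] with s hs
      rw [MeasureTheory.integral_const_mul, hcov s t hs.1.le ht,
        abs_of_nonneg (sub_nonneg.2 hs.2)]
    have eZZ : ∫ ω, Z ω ^ 2 ∂P
        = ∫ p, (k p.1 * k p.2) * (σ2 * Real.exp (-lam * |p.1 - p.2|)) ∂(R.prod R) := by
      have e2 : ∀ ω, Z ω ^ 2 = ∫ p, (k p.1 * k p.2) * (Y p.1 ω * Y p.2 ω) ∂(R.prod R) := by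
        intro ω
        rw [pow_two, hZset ω,
          ← integral_prod_mul (μ := R) (ν := R) (fun s => k s * Y s ω) (fun u => k u * Y u ω)]
        congr 1
        funext p
        ring
      rw [integral_congr_ae (ae_of_all _ e2),
        ← integral_integral_swap
          (f := fun (p : ℝ × ℝ) ω => (k p.1 * k p.2) * (Y p.1 ω * Y p.2 ω)) hInt3]
      refine integral_congr_ae ?_
      filter_upwards [hprodae] with p hp
      rw [MeasureTheory.integral_const_mul, hcov p.2 p.1 hp.2.1.le hp.1.1.le]
    have hGcont : Continuous
        fun p : ℝ × ℝ => (k p.1 * k p.2) * (σ2 * Real.exp (-lam * |p.1 - p.2|)) := by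
      apply Continuous.mul
      · exact (hkcont.comp continuous_fst).mul (hkcont.comp continuous_snd)
      · apply continuous_const.mul
        apply Real.continuous_exp.comp
        exact continuous_const.mul (continuous_fst.sub continuous_snd).abs
    have eZZ2 : ∫ p, (k p.1 * k p.2) * (σ2 * Real.exp (-lam * |p.1 - p.2|)) ∂(R.prod R)
        = ∫ s in (0:ℝ)..t, ∫ u in (0:ℝ)..t, (k s * k u) * (σ2 * Real.exp (-lam * |s - u|)) := by
      rw [hR, Measure.prod_restrict]
      rw [setIntegral_prod _
        ((hGcont.continuousOn.integrableOn_compact (isCompact_Icc.prod isCompact_Icc)).mono_set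
          (Set.prod_mono Set.Ioc_subset_Icc_self Set.Ioc_subset_Icc_self))]
      rw [intervalIntegral.integral_of_le ht]
      refine setIntegral_congr_fun measurableSet_Ioc ?_
      intro s _
      dsimp only
      rw [intervalIntegral.integral_of_le ht]
    have hXt : ∀ ω, X t ω = Y t ω - C * Z ω := fun ω => hX t ω
    have split : ∫ ω, X t ω ^ 2 ∂P
        = σ2 - 2 * C * (∫ ω, Y t ω * Z ω ∂P) + C ^ 2 * ∫ ω, Z ω ^ 2 ∂P := by
      have expand : (fun ω => X t ω ^ 2)
          = fun ω => (Y t ω ^ 2 - 2 * C * (Y t ω * Z ω)) + C ^ 2 * Z ω ^ 2 := by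
        funext ω
        rw [hXt ω]
        ring
      have i1 : Integrable (fun ω => Y t ω ^ 2 - 2 * C * (Y t ω * Z ω)) P :=
        (hsq t ht).sub (iYZ.const_mul _)
      have i2 : Integrable (fun ω => C ^ 2 * Z ω ^ 2) P := iZZ.const_mul _
      rw [expand, integral_add i1 i2, integral_sub (hsq t ht) (iYZ.const_mul (2*C)),
        MeasureTheory.integral_const_mul, MeasureTheory.integral_const_mul, hYsq t ht]
    have hb0 : (C + 2*lam) ≠ 0 := ne_of_gt hB
    have d1 : ∫ s, k s * (σ2 * Real.exp (-lam * (t - s))) ∂ R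
        = σ2 * Real.exp (-(C + 2*lam) * t) * ((Real.exp ((C + 2*lam) * t) - 1) / (C + 2*lam)) := by
      rw [← intervalIntegral.integral_of_le ht]
      have heq : Set.EqOn (fun s => k s * (σ2 * Real.exp (-lam * (t - s))))
          (fun s => (σ2 * Real.exp (-(C + 2*lam) * t)) * Real.exp ((C + 2*lam) * s))
          (Set.uIcc 0 t) := by
        intro s _
        simp only [hk]
        calc Real.exp (-(C + lam) * (t - s)) * (σ2 * Real.exp (-lam * (t - s)))
            = σ2 * Real.exp (-(C + lam) * (t - s) + -lam * (t - s)) := by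
              rw [Real.exp_add]; ring
          _ = σ2 * Real.exp (-(C + 2*lam) * t + (C + 2*lam) * s) := by
              rw [show -(C + lam) * (t - s) + -lam * (t - s)
                  = -(C + 2*lam) * t + (C + 2*lam) * s from by ring]
          _ = _ := by rw [Real.exp_add]; ring
      rw [intervalIntegral.integral_congr heq, intervalIntegral.integral_const_mul,
        int_exp_mul _ _ _ hb0, mul_zero, Real.exp_zero]
    have hC0 : C ≠ 0 := ne_of_gt hC
    have hA0 : C + lam ≠ 0 := ne_of_gt hA
    have h2A0 : 2*(C+lam) ≠ 0 := by positivity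
    have inner : ∀ s : ℝ, 0 ≤ s → s ≤ t →
        (∫ u in (0:ℝ)..t, k u * Real.exp (-lam * |s - u|))
          = Real.exp (-(C+lam)*t - lam*s) * ((Real.exp ((C+2*lam)*s) - 1) / (C+2*lam))
            + Real.exp (-(C+lam)*t + lam*s) * ((Real.exp (C*t) - Real.exp (C*s)) / C) := by
      intro s hs hst
      have hcont1 : Continuous fun u => k u * Real.exp (-lam * |s - u|) := by
        apply hkcont.mul
        apply Real.continuous_exp.comp
        exact continuous_const.mul (continuous_const.sub continuous_id).abs
      rw [← intervalIntegral.integral_add_adjacent_intervals (a := (0:ℝ)) (b := s) (c := t)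
        (hcont1.intervalIntegrable _ _) (hcont1.intervalIntegrable _ _)]
      have heq1 : Set.EqOn (fun u => k u * Real.exp (-lam * |s - u|))
          (fun u => Real.exp (-(C+lam)*t - lam*s) * Real.exp ((C+2*lam)*u)) (Set.uIcc 0 s) := by
        intro u hu
        rw [Set.uIcc_of_le hs] at hu
        simp only [hk]
        rw [abs_of_nonneg (by linarith [hu.2] : (0:ℝ) ≤ s - u)]
        calc Real.exp (-(C + lam) * (t - u)) * Real.exp (-lam * (s - u))
            = Real.exp (-(C + lam) * (t - u) + -lam * (s - u)) := by rw [Real.exp_add]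
          _ = Real.exp ((-(C+lam)*t - lam*s) + (C+2*lam)*u) := by
              rw [show -(C + lam) * (t - u) + -lam * (s - u)
                  = (-(C+lam)*t - lam*s) + (C+2*lam)*u from by ring]
          _ = _ := by rw [Real.exp_add]
      have heq2 : Set.EqOn (fun u => k u * Real.exp (-lam * |s - u|))
          (fun u => Real.exp (-(C+lam)*t + lam*s) * Real.exp (C*u)) (Set.uIcc s t) := by
        intro u hu
        rw [Set.uIcc_of_le hst] at hu
        simp only [hk]
        rw [abs_of_nonpos (by linarith [hu.1] : s - u ≤ 0)]
        calc Real.exp (-(C + lam) * (t - u)) * Real.exp (-lam * -(s - u))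
            = Real.exp (-(C + lam) * (t - u) + -lam * -(s - u)) := by rw [Real.exp_add]
          _ = Real.exp ((-(C+lam)*t + lam*s) + C*u) := by
              rw [show -(C + lam) * (t - u) + -lam * -(s - u)
                  = (-(C+lam)*t + lam*s) + C*u from by ring]
          _ = _ := by rw [Real.exp_add]
      rw [intervalIntegral.integral_congr heq1, intervalIntegral.integral_congr heq2,
        intervalIntegral.integral_const_mul, intervalIntegral.integral_const_mul,
        int_exp_mul _ _ _ hb0, int_exp_mul _ _ _ hC0, mul_zero, Real.exp_zero]
    have hie : ∀ c d : ℝ, IntervalIntegrable (fun x => d * Real.exp (c*x)) volume 0 t := by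
      intro c d
      apply Continuous.intervalIntegrable
      fun_prop
    have d2 : (∫ s in (0:ℝ)..t, ∫ u in (0:ℝ)..t, k s * k u * (σ2 * Real.exp (-lam * |s - u|)))
        = (σ2 * Real.exp (-2*(C+lam)*t) * (1/(C+2*lam) - 1/C))
            * ((Real.exp (2*(C+lam)*t) - 1) / (2*(C+lam)))
          + ((-(σ2 * Real.exp (-2*(C+lam)*t))/(C+2*lam)) * ((Real.exp (C*t) - 1) / C)
          + (σ2 * Real.exp (-(C+2*lam)*t)/C) * ((Real.exp ((C+2*lam)*t) - 1) / (C+2*lam))) := by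
      have heq : Set.EqOn
          (fun s => ∫ u in (0:ℝ)..t, k s * k u * (σ2 * Real.exp (-lam * |s - u|)))
          (fun s => (σ2 * Real.exp (-2*(C+lam)*t) * (1/(C+2*lam) - 1/C)) * Real.exp (2*(C+lam)*s)
            + ((-(σ2 * Real.exp (-2*(C+lam)*t))/(C+2*lam)) * Real.exp (C*s)
            + (σ2 * Real.exp (-(C+2*lam)*t)/C) * Real.exp ((C+2*lam)*s))) (Set.uIcc 0 t) := by
        intro s hsmem
        rw [Set.uIcc_of_le ht] at hsmem
        dsimp only
        have hpull : (fun u => k s * k u * (σ2 * Real.exp (-lam * |s - u|)))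
            = fun u => (σ2 * k s) * (k u * Real.exp (-lam * |s - u|)) := by
          funext u
          ring
        rw [hpull, intervalIntegral.integral_const_mul, inner s hsmem.1 hsmem.2]
        simp only [hk]
        rw [show -(C+lam)*(t-s) = (C+lam)*s - (C+lam)*t from by ring,
            show -(C+lam)*t - lam*s = -((C+lam)*t + lam*s) from by ring,
            show (C+2*lam)*s = (C+lam)*s + lam*s from by ring,
            show -(C+lam)*t + lam*s = lam*s - (C+lam)*t from by ring,
            show C*t = (C+lam)*t - lam*t from by ring,
            show C*s = (C+lam)*s - lam*s from by ring,
            show -2*(C+lam)*t = -((C+lam)*t + (C+lam)*t) from by ring,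
            show 2*(C+lam)*s = (C+lam)*s + (C+lam)*s from by ring,
            show -(C+2*lam)*t = -((C+lam)*t + lam*t) from by ring]
        simp only [Real.exp_sub, Real.exp_add, Real.exp_neg]
        have e1 := Real.exp_ne_zero ((C+lam)*s)
        have e2 := Real.exp_ne_zero (lam*s)
        have e3 := Real.exp_ne_zero ((C+lam)*t)
        have e4 := Real.exp_ne_zero (lam*t)
        field_simp
        ring
      rw [intervalIntegral.integral_congr heq,
        intervalIntegral.integral_add (hie _ _) ((hie _ _).add (hie _ _)),
        intervalIntegral.integral_add (hie _ _) (hie _ _),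
        intervalIntegral.integral_const_mul, intervalIntegral.integral_const_mul,
        intervalIntegral.integral_const_mul,
        int_exp_mul _ _ _ h2A0, int_exp_mul _ _ _ hC0, int_exp_mul _ _ _ hb0]
      simp only [mul_zero, Real.exp_zero]
    rw [split, eYZ, d1, eZZ, eZZ2, d2]
    rw [show -(C+2*lam)*t = -((C+lam)*t + lam*t) from by ring,
        show (C+2*lam)*t = (C+lam)*t + lam*t from by ring,
        show -2*(C+lam)*t = -((C+lam)*t + (C+lam)*t) from by ring,
        show 2*(C+lam)*t = (C+lam)*t + (C+lam)*t from by ring,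
        show C*t = (C+lam)*t - lam*t from by ring]
    clear * - hC0 hA0 hb0 h2A0
    simp only [Real.exp_sub, Real.exp_add, Real.exp_neg]
    set u := Real.exp ((C+lam)*t) with hu'
    set v := Real.exp (lam*t) with hv'
    have hu : u ≠ 0 := by rw [hu']; exact Real.exp_ne_zero _
    have hv : v ≠ 0 := by rw [hv']; exact Real.exp_ne_zero _
    clear_value u v
    clear * - hu hv hC0 hA0 hb0 h2A0
    field_simp
    ring

  refine ⟨main, ?_, ?_⟩
  · intro t htpos
    rw [main t htpos.le]
    have h1 : Real.exp (-2 * (C + lam) * t) < 1 := by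
      rw [Real.exp_lt_one_iff]
      nlinarith
    have h2 : 0 < C / (C + lam) := div_pos hC hA
    nlinarith [mul_pos hσ (mul_pos h2 (sub_pos.mpr h1))]
  · intro s t hs hst
    rw [main s hs, main t (hs.trans hst.le)]
    have h1 : Real.exp (-2 * (C + lam) * t) < Real.exp (-2 * (C + lam) * s) := by
      apply Real.exp_lt_exp.2
      nlinarith
    have h2 : 0 < C / (C + lam) := div_pos hC hA
    nlinarith [mul_pos hσ (mul_pos h2 (sub_pos.mpr h1))]
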